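/- Let V be a finite-dimensional complex vector space and c₁, c₂ ∈ Λ²V two bivectors, regarded as skew-symmetric linear maps c^♯ : V* → V. Let J = span{c₁,c₂}, let R₀ be the maximal rank of elements of J, and F₀ ⊂ V* the subspace spanned by the kernels of all elements of J of rank R₀. Then for any two nonzero a, b ∈ J one has a^♯(F₀) = b^♯(F₀). -/

import Mathlib

open Module LinearMap

section PencilAuxSection
open Polynomial
namespace PencilAux

variable {D W : Type*} [AddCommGroup D] [Module ℂ D] [AddCommGroup W] [Module ℂ W]

instance pmCoeFun : CoeFun (PolynomialModule ℂ D) (fun _ => ℕ → D) := ⟨fun w => w.coeff⟩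

lemma _root_.PolynomialModule.add_apply (x y : PolynomialModule ℂ D) (i : ℕ) :
    (x + y) i = x i + y i := rfl

lemma _root_.PolynomialModule.zero_apply (i : ℕ) : (0 : PolynomialModule ℂ D) i = 0 := rfl

lemma pm_sub_apply (x y : PolynomialModule ℂ D) (i : ℕ) : (x - y) i = x i - y i := rfl

lemma pm_smul_apply (c : ℂ) (x : PolynomialModule ℂ D) (i : ℕ) : (c • x) i = c • x i := rfl

noncomputable def toPoly (φ : D →ₗ[ℂ] ℂ) : PolynomialModule ℂ D →ₗ[ℂ[X]] ℂ[X] where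
  toFun w := PolynomialModule.equivPolynomialSelf (PolynomialModule.map ℂ φ w)
  map_add' x y := by simp
  map_smul' f w := by
    have h := PolynomialModule.map_smul ℂ φ f w
    rw [Algebra.algebraMap_self, Polynomial.map_id] at h
    simp [h, smul_eq_mul]

lemma toPoly_eval (φ : D →ₗ[ℂ] ℂ) (w : PolynomialModule ℂ D) (l : ℂ) :
    (toPoly φ w).eval l = φ (PolynomialModule.eval l w) := by
  induction w using PolynomialModule.induction_linear with
  | zero => simp [toPoly]
  | add f g hf hg => simp only [map_add, Polynomial.eval_add, hf, hg]
  | single n a =>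
      simp [toPoly, PolynomialModule.map_single, PolynomialModule.equivPolynomialSelf_apply_eq,
        PolynomialModule.eval_single, smul_eq_mul, mul_comm]

lemma toPoly_coeff (φ : D →ₗ[ℂ] ℂ) (w : PolynomialModule ℂ D) (i : ℕ) :
    (toPoly φ w).coeff i = φ (w i) := by
  induction w using PolynomialModule.induction_linear with
  | zero => simp [toPoly]
  | add f g hf hg =>
      simp only [map_add, Polynomial.coeff_add, PolynomialModule.add_apply, map_add] at *
      rw [hf, hg]
  | single n a =>
      simp only [toPoly, LinearMap.coe_mk, AddHom.coe_mk, PolynomialModule.map_single,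
        PolynomialModule.equivPolynomialSelf_apply_eq, PolynomialModule.equivPolynomial_single,
        Polynomial.coeff_monomial, PolynomialModule.single_apply, Finsupp.single_apply]
      split_ifs <;> simp

lemma exists_toPoly_ne_zero [FiniteDimensional ℂ D] {w : PolynomialModule ℂ D} (hw : w ≠ 0) :
    ∃ φ : D →ₗ[ℂ] ℂ, toPoly φ w ≠ 0 := by
  have : ∃ i, w i ≠ 0 := by
    by_contra h
    push_neg at h
    exact hw (PolynomialModule.ext (Finsupp.ext h))
  obtain ⟨i, hi⟩ := this
  set b := Module.finBasis ℂ D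
  have : ∃ j, b.repr (w i) j ≠ 0 := by
    by_contra h
    push_neg at h
    have : b.repr (w i) = 0 := Finsupp.ext h
    exact hi (by simpa using congrArg b.repr.symm this)
  obtain ⟨j, hj⟩ := this
  refine ⟨b.coord j, fun h0 => hj ?_⟩
  have := toPoly_coeff (b.coord j) w i
  rw [h0] at this
  simpa [Basis.coord_apply] using this.symm

/-- Finitely many roots of a nonzero polynomial. -/
lemma finite_roots {d : ℂ[X]} (hd : d ≠ 0) : {l : ℂ | d.eval l = 0}.Finite := by
  by_contra h
  exact hd (Polynomial.eq_zero_of_infinite_isRoot d h)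

/-- KEY: evaluation preserves independence for cofinitely many points. -/
lemma ind [FiniteDimensional ℂ W] :
    ∀ (m : ℕ) (p : Fin m → PolynomialModule ℂ W), LinearIndependent ℂ[X] p →
    {l : ℂ | ¬ LinearIndependent ℂ fun j => PolynomialModule.eval l (p j)}.Finite := by
  intro m
  induction m with
  | zero =>
      intro p _
      convert Set.finite_empty
      rw [Set.eq_empty_iff_forall_notMem]
      intro l hl
      exact hl linearIndependent_empty_type
  | succ m ih =>
      intro p hp
      have hp0 : p 0 ≠ 0 := hp.ne_zero 0
      obtain ⟨φ, hφ⟩ := exists_toPoly_ne_zero hp0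
      set d : ℂ[X] := toPoly φ (p 0) with hd
      set g : Fin m → ℂ[X] := fun j => toPoly φ (p j.succ) with hg
      set q : Fin m → PolynomialModule ℂ W := fun j => d • p j.succ - g j • p 0 with hq
      have hqind : LinearIndependent ℂ[X] q := by
        rw [Fintype.linearIndependent_iff]
        intro f hf j
        set F : Fin (m + 1) → ℂ[X] :=
          Fin.cases (- ∑ jj : Fin m, f jj * g jj) (fun jj => f jj * d) with hFdef
        have hsum : ∑ i, F i • p i = 0 := by
          rw [Fin.sum_univ_succ]
          simp only [hFdef, Fin.cases_zero, Fin.cases_succ]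
          have expand : ∀ jj ∈ Finset.univ, f jj • q jj
              = (f jj * d) • p jj.succ - (f jj * g jj) • p 0 := by
            intro jj _
            rw [hq]
            simp only [smul_sub, smul_smul]
          have : (0 : PolynomialModule ℂ W)
              = ∑ jj : Fin m, ((f jj * d) • p jj.succ - (f jj * g jj) • p 0) := by
            rw [← Finset.sum_congr rfl expand, hf]
          rw [Finset.sum_sub_distrib, ← Finset.sum_smul] at this
          rw [neg_smul]
          linear_combination (norm := module) -this
        have hall := Fintype.linearIndependent_iff.mp hp F hsum
        have := hall j.succ
        simp only [hFdef, Fin.cases_succ] at this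
        rcases mul_eq_zero.mp this with h1 | h2
        · exact h1
        · exact absurd h2 hφ
      have hbad := (ih q hqind).union (finite_roots hφ)
      refine Set.Finite.subset hbad ?_
      intro l hl
      by_contra hout
      simp only [Set.mem_union, Set.mem_setOf_eq] at hout
      push_neg at hout
      obtain ⟨hqgood, hdl⟩ := hout
      apply hl
      rw [Fintype.linearIndependent_iff]
      intro b hb
      set e : Fin (m + 1) → W := fun i => PolynomialModule.eval l (p i) with he
      have hbsplit : b 0 • e 0 + ∑ j : Fin m, b j.succ • e j.succ = 0 := by
        rw [← Fin.sum_univ_succ (f := fun i => b i • e i)]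
        exact hb
      have hqe : ∀ j : Fin m, PolynomialModule.eval l (q j)
          = d.eval l • e j.succ - (g j).eval l • e 0 := by
        intro j
        rw [hq]
        simp only [map_sub, PolynomialModule.eval_smul, he]
      have hφq : ∀ j : Fin m, φ (PolynomialModule.eval l (q j)) = 0 := by
        intro j
        rw [← toPoly_eval]
        have : toPoly φ (q j) = 0 := by
          rw [hq]
          simp only [map_sub, map_smul, smul_eq_mul, ← hd, ← hg]
          ring
        rw [this, Polynomial.eval_zero]
      set C : ℂ := b 0 * d.eval l + ∑ j : Fin m, b j.succ * (g j).eval l with hC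
      have key : ∑ j : Fin m, b j.succ • PolynomialModule.eval l (q j) + C • e 0
          = d.eval l • (b 0 • e 0 + ∑ j : Fin m, b j.succ • e j.succ) := by
        have h1 : ∀ j ∈ Finset.univ, b j.succ • PolynomialModule.eval l (q j)
            = d.eval l • (b j.succ • e j.succ) - (b j.succ * (g j).eval l) • e 0 := by
          intro j _
          rw [hqe j, smul_sub, smul_smul, smul_smul, smul_smul, mul_comm (b j.succ) (d.eval l)]
        rw [Finset.sum_congr rfl h1, Finset.sum_sub_distrib, ← Finset.smul_sum,
          ← Finset.sum_smul, hC]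
        module
      have key2 : ∑ j : Fin m, b j.succ • PolynomialModule.eval l (q j) + C • e 0 = 0 := by
        rw [key, hbsplit, smul_zero]
      have hCzero : C = 0 := by
        have happ := congrArg φ key2
        simp only [map_add, map_sum, map_smul, hφq, smul_eq_mul, mul_zero,
          Finset.sum_const_zero, zero_add, map_zero] at happ
        have hφe0 : φ (e 0) = d.eval l := (toPoly_eval φ (p 0) l).symm
        rw [hφe0] at happ
        rcases mul_eq_zero.mp happ with h1 | h2
        · exact h1
        · exact absurd h2 hdl
      have hq0 : ∑ j : Fin m, b j.succ • PolynomialModule.eval l (q j) = 0 := by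
        rw [hCzero, zero_smul, add_zero] at key2
        exact key2
      have hsucczero : ∀ j : Fin m, b j.succ = 0 :=
        Fintype.linearIndependent_iff.mp hqgood (fun j => b j.succ) hq0
      have hb0 : b 0 = 0 := by
        rw [hC] at hCzero
        simp only [hsucczero, zero_mul, Finset.sum_const_zero, add_zero] at hCzero
        rcases mul_eq_zero.mp hCzero with h1 | h2
        · exact h1
        · exact absurd h2 hdl
      intro i
      refine Fin.cases hb0 hsucczero i


variable {D W : Type*} [AddCommGroup D] [Module ℂ D] [AddCommGroup W] [Module ℂ W]

/-- The pencil map `w(X) ↦ (d₁ + X d₂) w(X)` on polynomial modules, `ℂ[X]`-linear. -/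
noncomputable def Phi (d₁ d₂ : D →ₗ[ℂ] W) :
    PolynomialModule ℂ D →ₗ[ℂ[X]] PolynomialModule ℂ W where
  toFun w := PolynomialModule.map ℂ d₁ w + (X : ℂ[X]) • PolynomialModule.map ℂ d₂ w
  map_add' x y := by simp only [map_add, smul_add]; abel
  map_smul' f w := by
    have h1 := PolynomialModule.map_smul ℂ d₁ f w
    have h2 := PolynomialModule.map_smul ℂ d₂ f w
    rw [Algebra.algebraMap_self, Polynomial.map_id] at h1 h2
    simp only [h1, h2, RingHom.id_apply, smul_add]
    rw [smul_comm]

lemma map_apply' (f : D →ₗ[ℂ] W) (w : PolynomialModule ℂ D) (i : ℕ) :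
    (PolynomialModule.map ℂ f w) i = f (w i) := by
  induction w using PolynomialModule.induction_linear with
  | zero => simp
  | add a c ha hc => simp [PolynomialModule.add_apply, ha, hc]
  | single n a =>
      rw [PolynomialModule.map_single]
      simp [PolynomialModule.single_apply, Finsupp.single_apply]
      split_ifs <;> simp

lemma X_smul_apply (w : PolynomialModule ℂ W) (i : ℕ) :
    ((X : ℂ[X]) • w) i = if 1 ≤ i then w (i - 1) else 0 := by
  have : (X : ℂ[X]) = Polynomial.monomial 1 (1 : ℂ) := by simp [Polynomial.X, ← Polynomial.monomial_one_one_eq_X]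
  rw [this, PolynomialModule.monomial_smul_apply]
  split_ifs <;> simp

lemma Phi_apply_zero (d₁ d₂ : D →ₗ[ℂ] W) (w : PolynomialModule ℂ D) :
    (Phi d₁ d₂ w) 0 = d₁ (w 0) := by
  simp [Phi, PolynomialModule.add_apply, map_apply', X_smul_apply]

lemma Phi_apply_succ (d₁ d₂ : D →ₗ[ℂ] W) (w : PolynomialModule ℂ D) (i : ℕ) :
    (Phi d₁ d₂ w) (i + 1) = d₁ (w (i + 1)) + d₂ (w i) := by
  simp [Phi, PolynomialModule.add_apply, map_apply', X_smul_apply]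

lemma Phi_eval (d₁ d₂ : D →ₗ[ℂ] W) (w : PolynomialModule ℂ D) (l : ℂ) :
    PolynomialModule.eval l (Phi d₁ d₂ w)
      = d₁ (PolynomialModule.eval l w) + l • d₂ (PolynomialModule.eval l w) := by
  have e1 := PolynomialModule.eval_map (R := ℂ) ℂ d₁ w l
  have e2 := PolynomialModule.eval_map (R := ℂ) ℂ d₂ w l
  rw [Algebra.algebraMap_self, RingHom.id_apply] at e1 e2
  simp [Phi, PolynomialModule.eval_smul, e1, e2]

/-- `PolynomialModule ℂ W` is torsion-free over `ℂ[X]`. -/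
lemma smul_eq_zero_iff {f : ℂ[X]} {w : PolynomialModule ℂ W} (hf : f ≠ 0) (h : f • w = 0) :
    w = 0 := by
  by_contra hw
  have hsupp : w.coeff.support.Nonempty := Finsupp.support_nonempty_iff.mpr (PolynomialModule.coeff_eq_zero.not.mpr hw)
  set i := w.coeff.support.max' hsupp with hidef
  have hiw : w i ≠ 0 := Finsupp.mem_support_iff.mp (w.coeff.support.max'_mem hsupp)
  have hkey : (f • w) (f.natDegree + i) = f.leadingCoeff • w i := by
    rw [PolynomialModule.smul_apply]
    rw [Finset.sum_eq_single (f.natDegree, i)]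
    · rfl
    · rintro ⟨a, b⟩ hab hne
      rw [Finset.HasAntidiagonal.mem_antidiagonal] at hab
      rcases lt_trichotomy a f.natDegree with hlt | heq | hgt
      · have hb : i < b := by omega
        have : w b = 0 := by
          by_contra hb0
          have := Finset.le_max' _ b (Finsupp.mem_support_iff.mpr hb0)
          omega
        simp [this]
      · exfalso; apply hne; have : b = i := by omega
        simp [heq, this]
      · have : f.coeff a = 0 := Polynomial.coeff_eq_zero_of_natDegree_lt hgt
        simp [this]
    · intro h'
      exfalso
      exact h' (Finset.HasAntidiagonal.mem_antidiagonal.mpr rfl)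
  rw [h] at hkey
  have : f.leadingCoeff • w i = 0 := by simpa using hkey.symm
  rcases smul_eq_zero.mp this with h1 | h2
  · exact hf (Polynomial.leadingCoeff_eq_zero.mp h1)
  · exact hiw h2


variable {D : Type*} [AddCommGroup D] [Module ℂ D]

lemma single_zero_smul (f : ℂ[X]) (m : D) (i : ℕ) :
    (f • PolynomialModule.single ℂ 0 m) i = f.coeff i • m := by
  rw [PolynomialModule.smul_single_apply]
  simp

/-- A basis of `D` gives a `ℂ[X]`-basis of `PolynomialModule ℂ D` via constants. -/
noncomputable def pbasis {n : ℕ} (b : Basis (Fin n) ℂ D) :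
    Basis (Fin n) ℂ[X] (PolynomialModule ℂ D) := by
  apply Basis.mk (v := fun j => PolynomialModule.single ℂ 0 (b j))
  · rw [linearIndependent_iff']
    intro s g hg j hj
    have hcoeff : ∀ i : ℕ, ∀ jj : Fin n, jj ∈ s → ((g jj • PolynomialModule.single ℂ 0 (b jj)) i) = (g jj).coeff i • b jj := fun i jj _ => single_zero_smul _ _ _
    ext i
    have happ := congrArg (fun w : PolynomialModule ℂ D => w i) hg
    simp only [PolynomialModule.zero_apply] at happ
    have : (∑ jj ∈ s, g jj • PolynomialModule.single ℂ 0 (b jj)) i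
        = ∑ jj ∈ s, (g jj).coeff i • b jj := by
      rw [PolynomialModule.coeff_sum, Finsupp.finset_sum_apply]
      exact Finset.sum_congr rfl (hcoeff i)
    rw [this] at happ
    have := linearIndependent_iff'.mp b.linearIndependent s (fun jj => (g jj).coeff i) happ j hj
    simpa using this
  · rw [top_le_iff, eq_top_iff]
    intro w _
    induction w using PolynomialModule.induction_linear with
    | zero => exact Submodule.zero_mem _
    | add a c hac hcc => exact Submodule.add_mem _ (hac trivial) (hcc trivial)
    | single i m =>
        have hm : m = ∑ j, b.repr m j • b j := (b.sum_repr m).symm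
        have : PolynomialModule.single ℂ i m
            = ∑ j, (Polynomial.monomial i (b.repr m j) : ℂ[X]) • PolynomialModule.single ℂ 0 (b j) := by
          rw [hm]
          change PolynomialModule.lsingle ℂ i _ = _
          rw [map_sum (PolynomialModule.lsingle ℂ i)]
          refine Finset.sum_congr rfl fun j _ => ?_
          change PolynomialModule.single ℂ i _ = _
          rw [PolynomialModule.monomial_smul_single]
          simp
        rw [this]
        exact Submodule.sum_mem _ fun j _ =>
          Submodule.smul_mem _ _ (Submodule.subset_span ⟨j, rfl⟩)




variable {D : Type*} [AddCommGroup D] [Module ℂ D]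

/-- identity cast -/
def ofF : (ℕ →₀ D) → PolynomialModule ℂ D := PolynomialModule.ofCoeff ℂ

lemma ofF_apply (f : ℕ →₀ D) (i : ℕ) : (ofF f : PolynomialModule ℂ D) i = f i := rfl

lemma X_smul_apply' (w : PolynomialModule ℂ D) (i : ℕ) :
    ((X : ℂ[X]) • w) i = if 1 ≤ i then w (i - 1) else 0 := by
  have : (X : ℂ[X]) = Polynomial.monomial 1 (1 : ℂ) := by
    simp [← Polynomial.monomial_one_one_eq_X]
  rw [this, PolynomialModule.monomial_smul_apply]
  split_ifs <;> simp

/-- Division: if `w(l) = 0` then `(X - l) ∣ w`. -/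
lemma exists_div {w : PolynomialModule ℂ D} {l : ℂ}
    (h : PolynomialModule.eval l w = 0) :
    ∃ w' : PolynomialModule ℂ D, w = ((X : ℂ[X]) - Polynomial.C l) • w' := by
  classical
  set F : ℕ → D := fun i => ∑ j ∈ w.coeff.support, if i < j then l ^ (j - i - 1) • w j else 0 with hF
  have hFsupp : ∀ i, F i ≠ 0 → i ∈ Finset.range (w.coeff.support.sup id) := by
    intro i hi
    by_contra hmem
    apply hi
    rw [hF]
    refine Finset.sum_eq_zero fun j hj => ?_
    have hj' : j ≤ w.coeff.support.sup id := Finset.le_sup (f := id) hj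
    have : ¬ i < j := by
      simp only [Finset.mem_range, not_lt] at hmem
      omega
    simp [this]
  refine ⟨ofF (Finsupp.onFinset _ F hFsupp), ?_⟩
  have hW' : ∀ i, (ofF (Finsupp.onFinset _ F hFsupp) : PolynomialModule ℂ D) i = F i := fun i => rfl
  set w' := ofF (Finsupp.onFinset _ F hFsupp) with hw'
  have heval : ∑ j ∈ w.coeff.support, l ^ j • w j = 0 := by
    have := h
    rw [PolynomialModule.eval_apply] at this
    exact this
  refine PolynomialModule.ext (Finsupp.ext fun i => ?_)
  have happ : (((X : ℂ[X]) - Polynomial.C l) • w') i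
      = (if 1 ≤ i then F (i - 1) else 0) - l • F i := by
    rw [sub_smul, pm_sub_apply]
    congr 1
    · rw [X_smul_apply' w' i]
      split_ifs with h1
      · exact hW' _
      · rfl
    · have : (Polynomial.C l) • w' = l • w' := by
        rw [← algebraMap_smul (R := ℂ) ℂ[X] l w']; rfl
      rw [this]
      rw [pm_smul_apply, hW']
  rw [happ]
  rcases Nat.eq_zero_or_pos i with hi0 | hipos
  · subst hi0
    simp only [show ¬ (1 ≤ 0) by omega, if_false, zero_sub]
    have hl : l • F 0 = ∑ j ∈ w.coeff.support, if 0 < j then l ^ j • w j else 0 := by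
      rw [hF, Finset.smul_sum]
      refine Finset.sum_congr rfl fun j hj => ?_
      split_ifs with h1
      · rw [smul_smul, ← pow_succ']
        congr 2
        omega
      · simp
    have hw0 : (w 0 : D) = ∑ j ∈ w.coeff.support, if j = 0 then l ^ j • w j else 0 := by
      rw [Finset.sum_ite_eq' w.coeff.support 0 (fun j => l ^ j • w j)]
      split_ifs with h1
      · simp
      · rw [Finsupp.notMem_support_iff] at h1
        simp [h1]
    have hsum : l • F 0 + w 0 = 0 := by
      rw [hl, hw0, ← Finset.sum_add_distrib]
      have hterm : ∀ j ∈ w.coeff.support,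
          ((if 0 < j then l ^ j • w j else 0) + (if j = 0 then l ^ j • w j else 0))
            = l ^ j • w j := by
        intro j _
        rcases Nat.eq_zero_or_pos j with rfl | hj0
        · rw [if_neg (by omega), if_pos rfl, zero_add]
        · rw [if_pos hj0, if_neg (by omega), add_zero]
      rw [Finset.sum_congr rfl hterm, heval]
    exact eq_neg_of_add_eq_zero_right hsum
  · rw [if_pos (by omega : 1 ≤ i)]
    have : F (i - 1) - l • F i = ∑ j ∈ w.coeff.support, if j = i then w j else 0 := by
      rw [hF, Finset.smul_sum, ← Finset.sum_sub_distrib]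
      refine Finset.sum_congr rfl fun j hj => ?_
      rcases lt_trichotomy j i with hlt | heq | hgt
      · rw [if_neg (by omega), if_neg (by omega), if_neg (by omega), smul_zero, sub_zero]
      · subst heq
        rw [if_pos (by omega), if_neg (by omega), if_pos rfl, smul_zero, sub_zero]
        have he : j - (j - 1) - 1 = 0 := by omega
        rw [he, pow_zero, one_smul]
      · rw [if_pos (by omega), if_pos (by omega), if_neg (by omega)]
        rw [smul_smul, ← pow_succ']
        have he : (j - (i - 1) - 1) = (j - i - 1) + 1 := by omega
        rw [he, pow_succ', sub_self]
    rw [this, Finset.sum_ite_eq' w.coeff.support i (fun j => w j)]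
    split_ifs with h1
    · rfl
    · rw [Finsupp.notMem_support_iff] at h1
      exact h1

variable {D W : Type*} [AddCommGroup D] [Module ℂ D] [AddCommGroup W] [Module ℂ W]

section Master
variable [FiniteDimensional ℂ D] [FiniteDimensional ℂ W]

noncomputable def Mker (d₁ d₂ : D →ₗ[ℂ] W) : Submodule ℂ[X] (PolynomialModule ℂ D) :=
  LinearMap.ker (Phi d₁ d₂)

noncomputable def Kev (d₁ d₂ : D →ₗ[ℂ] W) (l : ℂ) : Submodule ℂ D :=
  Submodule.map (PolynomialModule.eval (R := ℂ) l) ((Mker d₁ d₂).restrictScalars ℂ)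

lemma Kev_le_ker (d₁ d₂ : D →ₗ[ℂ] W) (l : ℂ) :
    Kev d₁ d₂ l ≤ LinearMap.ker (d₁ + l • d₂) := by
  rintro x ⟨w, hw, rfl⟩
  have hw' : Phi d₁ d₂ w = 0 := hw
  rw [LinearMap.mem_ker, LinearMap.add_apply, LinearMap.smul_apply]
  have := Phi_eval d₁ d₂ w l
  rw [hw', map_zero] at this
  exact this.symm

set_option maxHeartbeats 1000000 in
theorem master (d₁ d₂ : D →ₗ[ℂ] W) :
    ∃ k : ℕ,
      (∀ l : ℂ, finrank ℂ (Kev d₁ d₂ l) = k) ∧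
      (∀ l : ℂ, finrank ℂ (LinearMap.range (d₁ + l • d₂)) + k ≤ finrank ℂ D) ∧
      {l : ℂ | finrank ℂ (LinearMap.range (d₁ + l • d₂)) + k ≠ finrank ℂ D}.Finite := by
  classical
  set n := finrank ℂ D with hn
  set bD := Module.finBasis ℂ D with hbD
  set bP := pbasis bD with hbP
  obtain ⟨k, bM⟩ := Submodule.basisOfPid bP (Mker d₁ d₂)
  have hKev_span : ∀ l : ℂ, Kev d₁ d₂ l
      = Submodule.span ℂ (Set.range fun i : Fin k =>
          PolynomialModule.eval l ((bM i : PolynomialModule ℂ D))) := by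
    intro l
    apply le_antisymm
    · rintro x ⟨w, hw, rfl⟩
      have hrepr := bM.sum_repr ⟨w, hw⟩
      have hcoe : w = ∑ i, (bM.repr ⟨w, hw⟩ i) • (bM i : PolynomialModule ℂ D) := by
        have := congrArg (Subtype.val) hrepr
        simpa only [Submodule.coe_sum, Submodule.coe_smul] using this.symm
      rw [hcoe, map_sum]
      refine Submodule.sum_mem _ fun i _ => ?_
      rw [PolynomialModule.eval_smul]
      exact Submodule.smul_mem _ _ (Submodule.subset_span ⟨i, rfl⟩)
    · rw [Submodule.span_le]
      rintro x ⟨i, rfl⟩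
      exact ⟨bM i, (bM i).2, rfl⟩
  have hKev_indep : ∀ l : ℂ, LinearIndependent ℂ
      (fun i : Fin k => PolynomialModule.eval l ((bM i : PolynomialModule ℂ D))) := by
    intro l
    have hambind : LinearIndependent ℂ[X] (fun i : Fin k => (bM i : PolynomialModule ℂ D)) :=
      bM.linearIndependent.map' (Mker d₁ d₂).subtype (Submodule.ker_subtype _)
    rw [Fintype.linearIndependent_iff]
    intro c hc
    have hUmem : (∑ i, (Polynomial.C (c i)) • (bM i : PolynomialModule ℂ D)) ∈ Mker d₁ d₂ :=
      Submodule.sum_mem _ fun i _ => Submodule.smul_mem _ _ (bM i).2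
    have hUeval : PolynomialModule.eval l
        (∑ i, (Polynomial.C (c i)) • (bM i : PolynomialModule ℂ D)) = 0 := by
      rw [map_sum, ← hc]
      refine Finset.sum_congr rfl fun i _ => ?_
      rw [PolynomialModule.eval_smul, Polynomial.eval_C]
    obtain ⟨w', hw'⟩ := exists_div hUeval
    have hw'mem : w' ∈ Mker d₁ d₂ := by
      have hPhiU : Phi d₁ d₂ (∑ i, (Polynomial.C (c i)) • (bM i : PolynomialModule ℂ D)) = 0 :=
        hUmem
      rw [hw', map_smul] at hPhiU
      exact smul_eq_zero_iff (Polynomial.X_sub_C_ne_zero l) hPhiU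
    set g : Fin k → ℂ[X] := fun i => bM.repr ⟨w', hw'mem⟩ i with hg
    have hwcoe : w' = ∑ i, g i • (bM i : PolynomialModule ℂ D) := by
      have := congrArg Subtype.val (bM.sum_repr ⟨w', hw'mem⟩)
      simpa only [Submodule.coe_sum, Submodule.coe_smul] using this.symm
    have hkey : ∑ i, (Polynomial.C (c i) - ((X : ℂ[X]) - Polynomial.C l) * g i)
        • (bM i : PolynomialModule ℂ D) = 0 := by
      have h2 : (∑ i, (Polynomial.C (c i)) • (bM i : PolynomialModule ℂ D))
          = ∑ i, ((((X : ℂ[X]) - Polynomial.C l) * g i)) • (bM i : PolynomialModule ℂ D) := by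
        rw [hw', hwcoe, Finset.smul_sum]
        refine Finset.sum_congr rfl fun i _ => ?_
        rw [smul_smul]
      simp only [sub_smul]
      rw [Finset.sum_sub_distrib, ← h2, sub_self]
    have hco := Fintype.linearIndependent_iff.mp hambind _ hkey
    intro i
    have h1 : Polynomial.C (c i) = ((X : ℂ[X]) - Polynomial.C l) * g i :=
      sub_eq_zero.mp (hco i)
    by_contra hci
    have hC0 : Polynomial.C (c i) ≠ 0 := by simpa using hci
    have hW0 : g i ≠ 0 := by
      intro h0
      rw [h0, mul_zero] at h1
      exact hC0 h1
    have hdeg := congrArg Polynomial.natDegree h1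
    rw [Polynomial.natDegree_C, Polynomial.natDegree_mul (Polynomial.X_sub_C_ne_zero l) hW0,
      Polynomial.natDegree_X_sub_C] at hdeg
    omega
  have hKevrank : ∀ l : ℂ, finrank ℂ (Kev d₁ d₂ l) = k := by
    intro l
    rw [hKev_span l, finrank_span_eq_card (hKev_indep l), Fintype.card_fin]
  have hle : ∀ l : ℂ, finrank ℂ (LinearMap.range (d₁ + l • d₂)) + k ≤ n := by
    intro l
    have h1 : k ≤ finrank ℂ (LinearMap.ker (d₁ + l • d₂)) := by
      rw [← hKevrank l]
      exact Submodule.finrank_mono (Kev_le_ker d₁ d₂ l)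
    have h2 := LinearMap.finrank_range_add_finrank_ker (d₁ + l • d₂)
    omega
  refine ⟨k, hKevrank, hle, ?_⟩
  -- third bullet : genericity
  haveI : Module.Finite ℂ[X] (PolynomialModule ℂ D) := Module.Finite.of_basis bP
  haveI hnzP : NoZeroSMulDivisors ℂ[X] (PolynomialModule ℂ W) := by
    constructor
    intro f w hfw
    by_cases hf : f = 0
    · exact Or.inl hf
    · exact Or.inr (smul_eq_zero_iff hf hfw)
  haveI hnzQ : NoZeroSMulDivisors ℂ[X] (PolynomialModule ℂ D ⧸ Mker d₁ d₂) := by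
    constructor
    intro f q hfq
    by_cases hf : f = 0
    · exact Or.inl hf
    · refine Or.inr ?_
      obtain ⟨p, rfl⟩ := Submodule.Quotient.mk_surjective _ q
      rw [← Submodule.Quotient.mk_smul, Submodule.Quotient.mk_eq_zero] at hfq
      have : Phi d₁ d₂ (f • p) = 0 := hfq
      rw [map_smul] at this
      have : Phi d₁ d₂ p = 0 := smul_eq_zero_iff hf this
      rw [Submodule.Quotient.mk_eq_zero]
      exact this
  haveI : Module.Finite ℂ[X] (PolynomialModule ℂ D ⧸ Mker d₁ d₂) :=
    Module.Finite.quotient ℂ[X] _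
  haveI : Module.Free ℂ[X] (PolynomialModule ℂ D ⧸ Mker d₁ d₂) :=
    Module.free_of_finite_type_torsion_free'
  set Q := PolynomialModule ℂ D ⧸ Mker d₁ d₂ with hQ
  set bQ := Module.Free.chooseBasis ℂ[X] Q with hbQ
  set ι := Module.Free.ChooseBasisIndex ℂ[X] Q with hι
  set m := Fintype.card ι with hm
  have hlift : ∀ j : ι, ∃ p : PolynomialModule ℂ D, Submodule.Quotient.mk p = bQ j :=
    fun j => Submodule.Quotient.mk_surjective _ (bQ j)
  choose nf hnf using hlift
  -- independence of Φ(nf j)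
  have hPhiInd : LinearIndependent ℂ[X] (fun j : ι => Phi d₁ d₂ (nf j)) := by
    rw [Fintype.linearIndependent_iff]
    intro f hf
    have hker : (∑ j, f j • nf j) ∈ Mker d₁ d₂ := by
      have : Phi d₁ d₂ (∑ j, f j • nf j) = 0 := by
        rw [map_sum]
        simpa [map_smul] using hf
      exact this
    have h0 : (Mker d₁ d₂).mkQ (∑ j, f j • nf j) = 0 := by
      rw [Submodule.mkQ_apply, Submodule.Quotient.mk_eq_zero]
      exact hker
    rw [map_sum] at h0
    simp only [map_smul, Submodule.mkQ_apply, hnf] at h0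
    exact Fintype.linearIndependent_iff.mp bQ.linearIndependent f h0
  -- spanning : n ≤ k + m
  have hspan : n ≤ k + m := by
    have hsp : ∀ x : D, x ∈ (Kev d₁ d₂ 0 ⊔ Submodule.span ℂ
        (Set.range fun j : ι => PolynomialModule.eval (0 : ℂ) (nf j))) := by
      intro x
      set p := PolynomialModule.single ℂ 0 x with hp
      set r : ι → ℂ[X] := fun j => bQ.repr (Submodule.Quotient.mk p) j with hr
      have hq0 : (p - ∑ j, r j • nf j) ∈ Mker d₁ d₂ := by
        rw [← Submodule.Quotient.mk_eq_zero (p := Mker d₁ d₂), ← Submodule.mkQ_apply]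
        have : (Mker d₁ d₂).mkQ (p - ∑ j, r j • nf j)
            = (Mker d₁ d₂).mkQ p - ∑ j, r j • (bQ j) := by
          rw [map_sub, map_sum]
          simp only [map_smul, Submodule.mkQ_apply, hnf]
        rw [this, Submodule.mkQ_apply, bQ.sum_repr (Submodule.Quotient.mk p), sub_self]
      have hx : x = PolynomialModule.eval (0 : ℂ) (p - ∑ j, r j • nf j)
          + ∑ j, ((r j).eval 0) • PolynomialModule.eval (0 : ℂ) (nf j) := by
        rw [map_sub, map_sum]
        have hpx : PolynomialModule.eval (0 : ℂ) p = x := by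
          rw [hp, PolynomialModule.eval_single, pow_zero, one_smul]
        rw [hpx]
        have : ∀ j ∈ Finset.univ, PolynomialModule.eval (0 : ℂ) (r j • nf j)
            = ((r j).eval 0) • PolynomialModule.eval (0 : ℂ) (nf j) :=
          fun j _ => PolynomialModule.eval_smul _ _ _
        rw [Finset.sum_congr rfl this]
        abel
      rw [hx]
      refine Submodule.add_mem _ ?_ ?_
      · exact Submodule.mem_sup_left ⟨_, hq0, rfl⟩
      · exact Submodule.mem_sup_right (Submodule.sum_mem _ fun j _ =>
          Submodule.smul_mem _ _ (Submodule.subset_span ⟨j, rfl⟩))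
    have htop : (Kev d₁ d₂ 0 ⊔ Submodule.span ℂ
        (Set.range fun j : ι => PolynomialModule.eval (0 : ℂ) (nf j))) = ⊤ :=
      eq_top_iff.mpr fun x _ => hsp x
    have h1 : n = finrank ℂ (⊤ : Submodule ℂ D) := (finrank_top ℂ D).symm
    rw [h1, ← htop]
    refine le_trans (Submodule.finrank_add_le_finrank_add_finrank _ _) ?_
    have h2 : finrank ℂ (Submodule.span ℂ
        (Set.range fun j : ι => PolynomialModule.eval (0 : ℂ) (nf j))) ≤ m := by
      refine le_trans (finrank_span_le_card _) ?_
      rw [Set.toFinset_range, hm]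
      exact le_trans (Finset.card_image_le) (by simp)
    rw [hKevrank 0]
    omega
  -- genericity via ind
  set ee := Fintype.equivFin ι with hee
  have hPhiInd' : LinearIndependent ℂ[X] (fun i : Fin m => Phi d₁ d₂ (nf (ee.symm i))) :=
    hPhiInd.comp ee.symm ee.symm.injective
  have hfin := ind m _ hPhiInd'
  refine Set.Finite.subset hfin ?_
  intro l hl
  simp only [Set.mem_setOf_eq] at hl ⊢
  intro hind
  apply hl
  -- vectors (d₁ + l d₂)(nf j (l)) are independent, lie in range
  have heq : ∀ i : Fin m, PolynomialModule.eval l (Phi d₁ d₂ (nf (ee.symm i)))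
      = (d₁ + l • d₂) (PolynomialModule.eval l (nf (ee.symm i))) := by
    intro i
    rw [Phi_eval]
    simp
  have hmem : ∀ i : Fin m, PolynomialModule.eval l (Phi d₁ d₂ (nf (ee.symm i)))
      ∈ LinearMap.range (d₁ + l • d₂) := fun i => by
    rw [heq i]; exact LinearMap.mem_range_self _ _
  have hrange_ge : m ≤ finrank ℂ (LinearMap.range (d₁ + l • d₂)) := by
    have hsple : Submodule.span ℂ (Set.range fun i : Fin m =>
        PolynomialModule.eval l (Phi d₁ d₂ (nf (ee.symm i)))) ≤ LinearMap.range (d₁ + l • d₂) := by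
      rw [Submodule.span_le]
      rintro x ⟨i, rfl⟩
      exact hmem i
    have := Submodule.finrank_mono hsple
    rw [finrank_span_eq_card hind, Fintype.card_fin] at this
    exact this
  have := hle l
  omega


lemma range_smul_eq (x : ℂ) (hx : x ≠ 0) (f : D →ₗ[ℂ] W) :
    LinearMap.range (x • f) = LinearMap.range f := by
  apply le_antisymm
  · rintro _ ⟨v, rfl⟩
    exact ⟨x • v, by simp [map_smul]⟩
  · rintro _ ⟨v, rfl⟩
    refine ⟨x⁻¹ • v, ?_⟩
    rw [LinearMap.smul_apply, map_smul, smul_smul, mul_inv_cancel₀ hx, one_smul]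

lemma mem_Mker_iff (d₁ d₂ : D →ₗ[ℂ] W) (w : PolynomialModule ℂ D) :
    w ∈ Mker d₁ d₂ ↔ (d₁ (w 0) = 0 ∧ ∀ i, d₁ (w (i + 1)) + d₂ (w i) = 0) := by
  constructor
  · intro h
    have h' : Phi d₁ d₂ w = 0 := h
    constructor
    · have h0 : (Phi d₁ d₂ w) 0 = 0 := by rw [h']; rfl
      rwa [Phi_apply_zero] at h0
    · intro i
      have hi : (Phi d₁ d₂ w) (i + 1) = 0 := by rw [h']; rfl
      rwa [Phi_apply_succ] at hi
  · intro ⟨h0, hs⟩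
    have : Phi d₁ d₂ w = 0 := by
      refine PolynomialModule.ext (Finsupp.ext fun i => ?_)
      cases i with
      | zero => rw [Phi_apply_zero]; exact h0
      | succ n => rw [Phi_apply_succ]; exact hs n
    exact this

lemma mker_rel {d₁ d₂ : D →ₗ[ℂ] W} {w : PolynomialModule ℂ D} (hw : w ∈ Mker d₁ d₂) (l : ℂ) :
    d₁ (PolynomialModule.eval l w) + l • d₂ (PolynomialModule.eval l w) = 0 := by
  have h' : Phi d₁ d₂ w = 0 := hw
  have := Phi_eval d₁ d₂ w l
  rw [h', map_zero] at this
  exact this.symm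

/-- The invariant image subspace. -/
noncomputable def Esub (d₁ d₂ : D →ₗ[ℂ] W) : Submodule ℂ W :=
  Submodule.span ℂ {v : W | ∃ w ∈ Mker d₁ d₂, ∃ i : ℕ, d₂ (w i) = v}

lemma eval_image_mem (d₁ d₂ : D →ₗ[ℂ] W) {w : PolynomialModule ℂ D}
    (hw : w ∈ Mker d₁ d₂) (l : ℂ) :
    d₂ (PolynomialModule.eval l w) ∈ Esub d₁ d₂ := by
  rw [PolynomialModule.eval_apply, Finsupp.sum, map_sum]
  refine Submodule.sum_mem _ fun i _ => ?_
  rw [map_smul]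
  exact Submodule.smul_mem _ _ (Submodule.subset_span ⟨w, hw, i, rfl⟩)

lemma Esub_le_symm (d₁ d₂ : D →ₗ[ℂ] W) : Esub d₂ d₁ ≤ Esub d₁ d₂ := by
  rw [Esub, Submodule.span_le]
  rintro _ ⟨wt, hwt, i, rfl⟩
  obtain ⟨ht0, hts⟩ := (mem_Mker_iff d₂ d₁ wt).mp hwt
  set N := wt.coeff.support.sup id with hN
  have hsupN : ∀ j, N < j → wt j = 0 := by
    intro j hj
    by_contra h0
    have h2 : j ≤ N := by
      simpa using Finset.le_sup (f := id) (Finsupp.mem_support_iff.mpr h0)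
    omega
  -- reversed polynomial
  set F : ℕ → D := fun j => if j ≤ N then wt (N - j) else 0 with hF
  have hFsupp : ∀ j, F j ≠ 0 → j ∈ Finset.range (N + 1) := by
    intro j hj
    rw [Finset.mem_range]
    by_contra hc
    apply hj
    rw [hF]
    simp only
    rw [if_neg (by omega)]
  set w : PolynomialModule ℂ D := ofF (Finsupp.onFinset _ F hFsupp) with hw
  have hwap : ∀ j, w j = F j := fun j => rfl
  have hwmem : w ∈ Mker d₁ d₂ := by
    rw [mem_Mker_iff]
    constructor
    · rw [hwap, hF]
      simp only [if_pos (by omega : 0 ≤ N), Nat.sub_zero]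
      have := hts N
      rw [hsupN (N + 1) (by omega), map_zero, zero_add] at this
      exact this
    · intro i
      rw [hwap, hwap, hF]
      simp only
      rcases le_or_gt (i + 1) N with h1 | h1
      · rw [if_pos h1, if_pos (by omega)]
        have := hts (N - i - 1)
        have heq : N - i - 1 + 1 = N - i := by omega
        rw [heq] at this
        have heq2 : N - (i + 1) = N - i - 1 := by omega
        rw [heq2]
        linear_combination (norm := module) this
      · rw [if_neg (by omega), map_zero, zero_add]
        rcases le_or_gt i N with h2 | h2
        · have : i = N := by omega
          subst this
          rw [if_pos (le_refl _), Nat.sub_self]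
          exact ht0
        · rw [if_neg (by omega), map_zero]
  -- now express d₁ (wt i)
  have hrel := hts i
  have hd1 : d₁ (wt i) = - d₂ (wt (i + 1)) := by linear_combination (norm := module) hrel
  rcases le_or_gt (i + 1) N with h1 | h1
  · have : wt (i + 1) = w (N - i - 1) := by
      rw [hwap, hF]
      simp only
      rw [if_pos (by omega)]
      congr 1
      omega
    rw [hd1, this]
    exact Submodule.neg_mem _ (Submodule.subset_span ⟨w, hwmem, N - i - 1, rfl⟩)
  · rw [hd1, hsupN (i + 1) h1, map_zero, neg_zero]
    exact Submodule.zero_mem _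

lemma Esub_comm (d₁ d₂ : D →ₗ[ℂ] W) : Esub d₂ d₁ = Esub d₁ d₂ :=
  le_antisymm (Esub_le_symm d₁ d₂) (Esub_le_symm d₂ d₁)

/-- Vandermonde-type lemma: coefficients lie in any subspace containing infinitely
many values. -/
lemma van (u : PolynomialModule ℂ W) (T : Set ℂ) (hT : T.Infinite)
    (Wsub : Submodule ℂ W) (h : ∀ l ∈ T, PolynomialModule.eval l u ∈ Wsub) :
    ∀ i, u i ∈ Wsub := by
  set π := Wsub.mkQ with hπ
  set ub := PolynomialModule.map ℂ π u with hub
  have hevz : ∀ l ∈ T, PolynomialModule.eval l ub = 0 := by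
    intro l hl
    have he := PolynomialModule.eval_map (R := ℂ) ℂ π u l
    rw [Algebra.algebraMap_self, RingHom.id_apply] at he
    rw [hub, he, hπ, Submodule.mkQ_apply, Submodule.Quotient.mk_eq_zero]
    exact h l hl
  have hub0 : ub = 0 := by
    by_contra h0
    obtain ⟨φ, hφ⟩ := exists_toPoly_ne_zero h0
    apply hφ
    apply Polynomial.eq_zero_of_infinite_isRoot
    refine Set.Infinite.mono ?_ hT
    intro l hl
    have := toPoly_eval φ ub l
    rw [hevz l hl, map_zero] at this
    exact this
  intro i
  have : π (u i) = 0 := by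
    rw [← map_apply' π u i, ← hub, hub0]
    rfl
  rwa [hπ, Submodule.mkQ_apply, Submodule.Quotient.mk_eq_zero] at this


end Master

end PencilAux
end PencilAuxSection

open PencilAux in
/-- For a pencil J = span{c₁,c₂} of bivectors on a finite-dimensional
complex vector space V (regarded as skew maps V* → V), with R₀ the maximal rank and
F₀ the span of the kernels of the maximal-rank members, one has a♯(F₀) = b♯(F₀)
for any two nonzero a, b ∈ J. -/
theorem stmt0 (V : Type*) [AddCommGroup V] [Module ℂ V] [FiniteDimensional ℂ V]
    (c₁ c₂ : Module.Dual ℂ V →ₗ[ℂ] V)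
    (hskew₁ : ∀ f g : Module.Dual ℂ V, f (c₁ g) = - g (c₁ f))
    (hskew₂ : ∀ f g : Module.Dual ℂ V, f (c₂ g) = - g (c₂ f))
    (J : Submodule ℂ (Module.Dual ℂ V →ₗ[ℂ] V)) (hJ : J = Submodule.span ℂ {c₁, c₂})
    (R₀ : ℕ)
    (hR₀le : ∀ c ∈ J, finrank ℂ (LinearMap.range c) ≤ R₀)
    (hR₀ex : ∃ c ∈ J, finrank ℂ (LinearMap.range c) = R₀)
    (F₀ : Submodule ℂ (Module.Dual ℂ V))
    (hF₀ : F₀ = Submodule.span ℂ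
      (⋃ c ∈ {c | c ∈ J ∧ finrank ℂ (LinearMap.range c) = R₀},
        (LinearMap.ker c : Set (Module.Dual ℂ V))))
    (a b : Module.Dual ℂ V →ₗ[ℂ] V) (ha : a ∈ J) (hb : b ∈ J)
    (ha0 : a ≠ 0) (hb0 : b ≠ 0) :
    F₀.map a = F₀.map b := by
  classical
  by_cases hR0 : R₀ = 0
  · exfalso
    have h1 : finrank ℂ (LinearMap.range a) = 0 := by
      have := hR₀le a ha
      omega
    have h2 : LinearMap.range a = ⊥ := Submodule.finrank_eq_zero.mp h1
    exact ha0 (LinearMap.range_eq_bot.mp h2)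
  suffices key : ∀ x ∈ J, x ≠ 0 → F₀.map x = Esub c₁ c₂ by
    rw [key a ha ha0, key b hb hb0]
  obtain ⟨k, hKrk, hle, hfin⟩ := master c₁ c₂
  obtain ⟨k', hKrk', hle', hfin'⟩ := master c₂ c₁
  set n := finrank ℂ (Module.Dual ℂ V) with hn
  set S : Set ℂ := {l | finrank ℂ (LinearMap.range (c₁ + l • c₂)) + k = n} with hS
  have hSinf : S.Infinite := by
    have hcf : Sᶜ.Finite := by
      refine Set.Finite.subset hfin ?_
      intro l hl
      exact hl
    simpa using hcf.infinite_compl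
  -- k' = k
  have hkk : k' = k := by
    set T : Set ℂ := {l | finrank ℂ (LinearMap.range (c₂ + l • c₁)) + k' = n} with hT
    have hbad2 : {l : ℂ | l ≠ 0 ∧ l⁻¹ ∉ T}.Finite := by
      have himg : {l : ℂ | l ≠ 0 ∧ l⁻¹ ∉ T} ⊆ (fun μ : ℂ => μ⁻¹) ''
          {μ : ℂ | finrank ℂ (LinearMap.range (c₂ + μ • c₁)) + k' ≠ n} := by
        rintro l ⟨hl0, hlT⟩
        exact ⟨l⁻¹, hlT, inv_inv l⟩
      exact Set.Finite.subset (Set.Finite.image _ hfin') himg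
    obtain ⟨l, hlS, hlrest⟩ := (hSinf.diff (hbad2.union (Set.finite_singleton 0))).nonempty
    simp only [Set.mem_union, Set.mem_singleton_iff, Set.mem_setOf_eq, not_or] at hlrest
    push_neg at hlrest
    obtain ⟨hl1, hl0⟩ := hlrest
    have hlT : l⁻¹ ∈ T := hl1 hl0
    have hrange : (c₂ + l⁻¹ • c₁) = l⁻¹ • (c₁ + l • c₂) := by
      rw [smul_add, smul_smul, inv_mul_cancel₀ hl0, one_smul, add_comm]
    have h1 : finrank ℂ (LinearMap.range (c₂ + l⁻¹ • c₁))
        = finrank ℂ (LinearMap.range (c₁ + l • c₂)) := by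
      rw [hrange, range_smul_eq _ (inv_ne_zero hl0)]
    have h2 : finrank ℂ (LinearMap.range (c₂ + l⁻¹ • c₁)) + k' = n := hlT
    have h3 : finrank ℂ (LinearMap.range (c₁ + l • c₂)) + k = n := hlS
    omega
  -- R₀ + k = n
  have hR₀k : R₀ + k = n := by
    obtain ⟨l₀, hl₀S⟩ := hSinf.nonempty
    have hmem : c₁ + l₀ • c₂ ∈ J := by
      rw [hJ]
      exact Submodule.mem_span_pair.mpr ⟨1, l₀, by simp⟩
    have hge := hR₀le _ hmem
    have h1 : finrank ℂ (LinearMap.range (c₁ + l₀ • c₂)) + k = n := hl₀S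
    obtain ⟨c, hcJ, hcrank⟩ := hR₀ex
    rw [hJ] at hcJ
    obtain ⟨α, β, hab⟩ := Submodule.mem_span_pair.mp hcJ
    by_cases hα : α = 0
    · by_cases hβ : β = 0
      · exfalso
        apply hR0
        rw [← hcrank]
        have : c = 0 := by rw [← hab, hα, hβ]; simp
        rw [this]
        simp
      · have h2 : finrank ℂ (LinearMap.range c)
            = finrank ℂ (LinearMap.range (c₂ + (0 : ℂ) • c₁)) := by
          have hceq : c = β • c₂ := by rw [← hab, hα]; simp
          have h0 : c₂ + (0 : ℂ) • c₁ = c₂ := by simp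
          rw [hceq, range_smul_eq _ hβ, h0]
        have h3 := hle' 0
        omega
    · have hceq : c = α • (c₁ + (α⁻¹ * β) • c₂) := by
        rw [← hab, smul_add, smul_smul, mul_inv_cancel_left₀ hα]
      have h2 : finrank ℂ (LinearMap.range c)
          = finrank ℂ (LinearMap.range (c₁ + (α⁻¹ * β) • c₂)) := by
        rw [hceq, range_smul_eq _ hα]
      have h3 := hle (α⁻¹ * β)
      omega
  -- the key claim
  intro x hxJ hx0
  rw [hJ] at hxJ
  obtain ⟨xa, xb, hxab⟩ := Submodule.mem_span_pair.mp hxJ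
  have hxnot : ¬ (xa = 0 ∧ xb = 0) := by
    rintro ⟨rfl, rfl⟩
    apply hx0
    rw [← hxab]
    simp
  apply le_antisymm
  -- map x F₀ ≤ Esub c₁ c₂
  · rw [hF₀, Submodule.map_span, Submodule.span_le]
    rintro _ ⟨v, hv, rfl⟩
    rw [Set.mem_iUnion₂] at hv
    obtain ⟨c, hc, hvker⟩ := hv
    obtain ⟨hcJ, hcrank⟩ := hc
    have hc0 : c ≠ 0 := by
      rintro rfl
      apply hR0
      rw [← hcrank]
      simp
    rw [hJ] at hcJ
    obtain ⟨γ, δ, hcd⟩ := Submodule.mem_span_pair.mp hcJ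
    by_cases hγ : γ = 0
    · have hδ : δ ≠ 0 := by
        rintro rfl
        apply hc0
        rw [← hcd, hγ]
        simp
      have hceq : c = δ • c₂ := by rw [← hcd, hγ]; simp
      have h0 : c₂ + (0 : ℂ) • c₁ = c₂ := by simp
      have hkerc : LinearMap.ker c = LinearMap.ker (c₂ + (0 : ℂ) • c₁) := by
        rw [hceq, LinearMap.ker_smul _ _ hδ, h0]
      have hrank2 : finrank ℂ (LinearMap.range (c₂ + (0 : ℂ) • c₁)) = R₀ := by
        rw [← hcrank, hceq, range_smul_eq _ hδ, h0]
      have hck : LinearMap.ker (c₂ + (0 : ℂ) • c₁) = Kev c₂ c₁ 0 := by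
        refine (Submodule.eq_of_le_of_finrank_eq (Kev_le_ker c₂ c₁ 0) ?_).symm
        rw [hKrk' 0]
        have hrn := LinearMap.finrank_range_add_finrank_ker (c₂ + (0 : ℂ) • c₁)
        rw [hrank2] at hrn
        omega
      rw [hkerc, hck] at hvker
      have hvker' : v ∈ Kev c₂ c₁ 0 := hvker
      obtain ⟨wt, hwt, hvev⟩ := hvker'
      have hwt' : wt ∈ Mker c₂ c₁ := hwt
      have hc₂v : c₂ v = 0 := by
        have hrel := mker_rel hwt' (0 : ℂ)
        rw [hvev] at hrel
        simpa using hrel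
      have hxv : x v = xa • (c₁ v) := by
        rw [← hxab]
        simp only [LinearMap.add_apply, LinearMap.smul_apply, hc₂v, smul_zero, add_zero]
      rw [hxv, ← hvev]
      refine Submodule.smul_mem _ _ ?_
      rw [← Esub_comm c₁ c₂]
      exact eval_image_mem c₂ c₁ hwt' 0
    · set l₀ := γ⁻¹ * δ with hl₀
      have hceq : c = γ • (c₁ + l₀ • c₂) := by
        rw [← hcd, smul_add, smul_smul, hl₀, mul_inv_cancel_left₀ hγ]
      have hkerc : LinearMap.ker c = LinearMap.ker (c₁ + l₀ • c₂) := by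
        rw [hceq, LinearMap.ker_smul _ _ hγ]
      have hrank2 : finrank ℂ (LinearMap.range (c₁ + l₀ • c₂)) = R₀ := by
        rw [← hcrank, hceq, range_smul_eq _ hγ]
      have hck : LinearMap.ker (c₁ + l₀ • c₂) = Kev c₁ c₂ l₀ := by
        refine (Submodule.eq_of_le_of_finrank_eq (Kev_le_ker c₁ c₂ l₀) ?_).symm
        rw [hKrk l₀]
        have hrn := LinearMap.finrank_range_add_finrank_ker (c₁ + l₀ • c₂)
        rw [hrank2] at hrn
        omega
      rw [hkerc, hck] at hvker
      obtain ⟨wt, hwt, hvev⟩ := hvker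
      have hwt' : wt ∈ Mker c₁ c₂ := hwt
      have hrel := mker_rel hwt' l₀
      have hxv : x v = (xb - xa * l₀) • (c₂ (PolynomialModule.eval l₀ wt)) := by
        rw [← hxab, ← hvev]
        simp only [LinearMap.add_apply, LinearMap.smul_apply]
        have hc1 : c₁ (PolynomialModule.eval l₀ wt)
            = -(l₀ • c₂ (PolynomialModule.eval l₀ wt)) := by
          linear_combination (norm := module) hrel
        rw [hc1]
        module
      rw [hxv]
      exact Submodule.smul_mem _ _ (eval_image_mem c₁ c₂ hwt' l₀)
  -- Esub ≤ map x F₀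
  · rw [Esub, Submodule.span_le]
    rintro _ ⟨w, hw, i, rfl⟩
    set Bad : Set ℂ := {l | xb - xa * l = 0} with hBad
    have hBadfin : Bad.Finite := by
      by_cases hxa : xa = 0
      · have hxb : xb ≠ 0 := fun h => hxnot ⟨hxa, h⟩
        convert Set.finite_empty
        rw [Set.eq_empty_iff_forall_notMem]
        intro l hl
        simp only [hBad, Set.mem_setOf_eq, hxa, zero_mul, sub_zero] at hl
        exact hxb hl
      · refine Set.Finite.subset (Set.finite_singleton (xa⁻¹ * xb)) ?_
        intro l hl
        simp only [hBad, Set.mem_setOf_eq] at hl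
        rw [sub_eq_zero] at hl
        simp only [Set.mem_singleton_iff]
        rw [hl, inv_mul_cancel_left₀ hxa]
    have hT'inf : (S \ Bad).Infinite := hSinf.diff hBadfin
    have hvals : ∀ l ∈ S \ Bad, c₂ (PolynomialModule.eval l w) ∈ F₀.map x := by
      intro l hl
      obtain ⟨hlS', hlB⟩ := hl
      have hlS2 : finrank ℂ (LinearMap.range (c₁ + l • c₂)) + k = n := hlS'
      have hlB' : xb - xa * l ≠ 0 := hlB
      have hkerF : (LinearMap.ker (c₁ + l • c₂) : Set (Module.Dual ℂ V)) ⊆ (F₀ : Set _) := by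
        rw [hF₀]
        intro v hv
        apply Submodule.subset_span
        rw [Set.mem_iUnion₂]
        refine ⟨c₁ + l • c₂, ⟨?_, ?_⟩, hv⟩
        · rw [hJ]
          exact Submodule.mem_span_pair.mpr ⟨1, l, by simp⟩
        · omega
      have hvmem : PolynomialModule.eval l w ∈ F₀ :=
        hkerF (Kev_le_ker c₁ c₂ l ⟨w, hw, rfl⟩)
      have hxvmem : x (PolynomialModule.eval l w) ∈ F₀.map x :=
        Submodule.mem_map_of_mem hvmem
      have hw' : w ∈ Mker c₁ c₂ := hw
      have hrel := mker_rel hw' l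
      have h1 : x (PolynomialModule.eval l w)
          = (xb - xa * l) • c₂ (PolynomialModule.eval l w) := by
        rw [← hxab]
        simp only [LinearMap.add_apply, LinearMap.smul_apply]
        have hc1 : c₁ (PolynomialModule.eval l w)
            = -(l • c₂ (PolynomialModule.eval l w)) := by
          linear_combination (norm := module) hrel
        rw [hc1]
        module
      have heq : c₂ (PolynomialModule.eval l w)
          = (xb - xa * l)⁻¹ • x (PolynomialModule.eval l w) := by
        rw [h1, smul_smul, inv_mul_cancel₀ hlB', one_smul]
      rw [heq]
      exact Submodule.smul_mem _ _ hxvmem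
    have hvan := van (PolynomialModule.map ℂ c₂ w) (S \ Bad) hT'inf (F₀.map x) ?_ i
    · rw [map_apply'] at hvan
      exact hvan
    · intro l hl
      have he := PolynomialModule.eval_map (R := ℂ) ℂ c₂ w l
      rw [Algebra.algebraMap_self, RingHom.id_apply] at he
      rw [he]
      exact hvals l hl
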